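/- For all positive integers $n$ and $n'$: $\sum_{\substack{a,b \ge 0 \\ a+b \le n\wedge n'}} a!\,b!\,\sqrt{(n+n'-a-b)!} \le \frac{2^{3(n+n')}\, n!\, n'!}{\sqrt{(n\vee n' - n\wedge n')!}}$. -/

import Mathlib

lemma choose_le_two_pow' (N k : ℕ) : N.choose k ≤ 2 ^ N := by
  rcases le_or_gt k N with h | h
  · calc N.choose k ≤ ∑ m ∈ Finset.range (N + 1), N.choose m :=
        Finset.single_le_sum (fun i _ => Nat.zero_le _) (Finset.mem_range.2 (by omega))
      _ = 2 ^ N := Nat.sum_range_choose N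
  · rw [Nat.choose_eq_zero_of_lt h]; positivity

lemma factorial_add_le (n n' : ℕ) :
    (n + n').factorial ≤ 2 ^ (n + n') * (n.factorial * n'.factorial) := by
  have h := Nat.choose_mul_factorial_mul_factorial (Nat.le_add_right n n')
  have h2 : n + n' - n = n' := by omega
  rw [h2] at h
  calc (n + n').factorial = (n + n').choose n * n.factorial * n'.factorial := h.symm
    _ ≤ 2 ^ (n + n') * n.factorial * n'.factorial := by
        have := choose_le_two_pow' (n + n') n
        exact Nat.mul_le_mul_right _ (Nat.mul_le_mul_right _ this)
    _ = 2 ^ (n + n') * (n.factorial * n'.factorial) := by ring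

theorem stmt_15 (n n' : ℕ) (hn : 1 ≤ n) (hn' : 1 ≤ n') :
    ∑ a ∈ Finset.range (min n n' + 1), ∑ b ∈ Finset.range (min n n' + 1 - a),
      (a.factorial : ℝ) * b.factorial * Real.sqrt ((n + n' - a - b).factorial)
    ≤ 2 ^ (3 * (n + n')) * n.factorial * n'.factorial /
        Real.sqrt ((max n n' - min n n').factorial) := by
  set m := min n n' with hm
  set D := max n n' - min n n' with hD
  have hsq : (0 : ℝ) < Real.sqrt D.factorial :=
    Real.sqrt_pos.2 (by exact_mod_cast D.factorial_pos)
  rw [le_div_iff₀ hsq]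
  have key : ∀ a ∈ Finset.range (m + 1), ∀ b ∈ Finset.range (m + 1 - a),
      (a.factorial : ℝ) * b.factorial * Real.sqrt ((n + n' - a - b).factorial) *
        Real.sqrt D.factorial ≤ 2 ^ (n + n') * (n.factorial * n'.factorial) := by
    intro a ha b hb
    rw [Finset.mem_range] at ha hb
    have hab : a + b ≤ m := by omega
    set K := n + n' - a - b with hK
    have hmle : m ≤ n + n' := by omega
    have hDK : D ≤ K := by
      have h1 : m ≤ n := min_le_left n n'
      have h2 : m ≤ n' := min_le_right n n'
      have h3 : max n n' ≤ n + n' := by omega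
      omega
    -- nat inequality: a! * b! * K! ≤ (n+n')!
    have htri : a.factorial * b.factorial * K.factorial ≤ (n + n').factorial := by
      have h1 : a.factorial * b.factorial ∣ (a + b).factorial :=
        Nat.factorial_mul_factorial_dvd_factorial_add a b
      have h2 : (a + b).factorial * K.factorial ∣ (n + n').factorial := by
        have := Nat.factorial_mul_factorial_dvd_factorial (show a + b ≤ n + n' by omega)
        have hKeq : n + n' - (a + b) = K := by omega
        rwa [hKeq] at this
      exact Nat.le_of_dvd (n + n').factorial_pos
        (dvd_trans (mul_dvd_mul_right h1 _) h2)
    have hbig : a.factorial * b.factorial * K.factorial ≤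
        2 ^ (n + n') * (n.factorial * n'.factorial) :=
      htri.trans (factorial_add_le n n')
    have hsqrtle : Real.sqrt ((K.factorial : ℝ) * D.factorial) ≤ (K.factorial : ℝ) := by
      have hDKr : (D.factorial : ℝ) ≤ (K.factorial : ℝ) := by
        exact_mod_cast Nat.factorial_le hDK
      have h1 : (K.factorial : ℝ) * D.factorial ≤ (K.factorial : ℝ) ^ 2 := by
        nlinarith [show (0:ℝ) < (K.factorial:ℝ) by exact_mod_cast K.factorial_pos]
      calc Real.sqrt ((K.factorial : ℝ) * D.factorial)
          ≤ Real.sqrt ((K.factorial : ℝ) ^ 2) := Real.sqrt_le_sqrt h1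
        _ = (K.factorial : ℝ) := Real.sqrt_sq (by positivity)
    calc (a.factorial : ℝ) * b.factorial * Real.sqrt K.factorial * Real.sqrt D.factorial
        = (a.factorial : ℝ) * b.factorial * Real.sqrt ((K.factorial : ℝ) * D.factorial) := by
          rw [mul_assoc, ← Real.sqrt_mul (by positivity)]
      _ ≤ (a.factorial : ℝ) * b.factorial * K.factorial := by
          have : (0:ℝ) ≤ (a.factorial : ℝ) * b.factorial := by positivity
          exact mul_le_mul_of_nonneg_left hsqrtle this
      _ ≤ 2 ^ (n + n') * (n.factorial * n'.factorial) := by exact_mod_cast hbig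
  set C : ℝ := 2 ^ (n + n') * (n.factorial * n'.factorial) with hC
  have hCpos : (0:ℝ) ≤ C := by positivity
  calc (∑ a ∈ Finset.range (m + 1), ∑ b ∈ Finset.range (m + 1 - a),
        (a.factorial : ℝ) * b.factorial * Real.sqrt ((n + n' - a - b).factorial)) *
        Real.sqrt D.factorial
      = ∑ a ∈ Finset.range (m + 1), ∑ b ∈ Finset.range (m + 1 - a),
        (a.factorial : ℝ) * b.factorial * Real.sqrt ((n + n' - a - b).factorial) *
          Real.sqrt D.factorial := by
        rw [Finset.sum_mul]; exact Finset.sum_congr rfl fun a _ => by rw [Finset.sum_mul]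
    _ ≤ ∑ a ∈ Finset.range (m + 1), ∑ _b ∈ Finset.range (m + 1 - a), C :=
        Finset.sum_le_sum fun a ha => Finset.sum_le_sum fun b hb => key a ha b hb
    _ = ∑ a ∈ Finset.range (m + 1), ((m + 1 - a : ℕ) : ℝ) * C := by
        simp [Finset.sum_const, nsmul_eq_mul]
    _ ≤ ∑ _a ∈ Finset.range (m + 1), ((m + 1 : ℕ) : ℝ) * C := by
        apply Finset.sum_le_sum
        intro a _
        have : ((m + 1 - a : ℕ) : ℝ) ≤ ((m + 1 : ℕ) : ℝ) := by exact_mod_cast Nat.sub_le _ _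
        exact mul_le_mul_of_nonneg_right this hCpos
    _ = ((m + 1 : ℕ) : ℝ) ^ 2 * C := by
        rw [Finset.sum_const, Finset.card_range, nsmul_eq_mul]; push_cast; ring
    _ ≤ ((2 : ℝ) ^ (n + n')) ^ 2 * C := by
        have h1 : m + 1 ≤ 2 ^ (n + n') := by
          have h2 : m + 1 ≤ n + n' + 1 := by
            have := min_le_left n n'; omega
          have h3 : n + n' < 2 ^ (n + n') := Nat.lt_two_pow_self
          omega
        have : ((m + 1 : ℕ) : ℝ) ≤ (2 : ℝ) ^ (n + n') := by exact_mod_cast h1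
        have h0 : (0:ℝ) ≤ ((m + 1 : ℕ) : ℝ) := by positivity
        exact mul_le_mul_of_nonneg_right (pow_le_pow_left₀ h0 this 2) hCpos
    _ = 2 ^ (3 * (n + n')) * n.factorial * n'.factorial := by
        rw [hC]; rw [show 3 * (n + n') = (n + n') + (n + n') + (n + n') by ring]
        rw [pow_add, pow_add]; ring
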